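/- Let m ≥ 1, let β_1, …, β_m ∈ (0, 1), set σ = β_1 + ⋯ + β_m, let p_1, …, p_m ∈ ℂ, let R > 0, and let q ∈ [1, ∞) satisfy qσ < 1. For t ∈ (0, 1] define f_t(z) = ∏_{j=1}^m |z − t p_j|^{−2β_j} and define f_0(z) = |z|^{−2σ} (for z avoiding the singular points). Then f_t converges to f_0 in L^q of the ball B_R = {z ∈ ℂ : |z| < R} with respect to Lebesgue measure as t → 0⁺, i.e. ∫_{B_R} |f_t − f_0|^q dA → 0. -/

import Mathlib

open MeasureTheory Filter Metric Set ENNReal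

namespace ProdRpowAux

lemma meas_abs_rpow (w : ℂ) (e : ℝ) :
    Measurable fun z : ℂ => ‖z - w‖ ^ e := by
  have h1 : Measurable fun z : ℂ => ‖z - w‖ :=
    (continuous_norm.comp (continuous_id.sub continuous_const)).measurable
  measurability

lemma rpow_superadd {x y q : ℝ} (hx : 0 ≤ x) (hy : 0 ≤ y) (hq : 1 ≤ q) :
    x ^ q + y ^ q ≤ (x + y) ^ q := by
  have h := NNReal.add_rpow_le_rpow_add x.toNNReal y.toNNReal hq
  have h2 : ((x.toNNReal ^ q + y.toNNReal ^ q : NNReal) : ℝ)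
      ≤ (((x.toNNReal + y.toNNReal) ^ q : NNReal) : ℝ) := by exact_mod_cast h
  rw [NNReal.coe_add, NNReal.coe_rpow, NNReal.coe_rpow, NNReal.coe_rpow, NNReal.coe_add,
    Real.coe_toNNReal x hx, Real.coe_toNNReal y hy] at h2
  exact h2

lemma abs_sub_rpow_le {a b q : ℝ} (ha : 0 ≤ a) (hb : 0 ≤ b) (hq : 1 ≤ q) :
    |a - b| ^ q ≤ |a ^ q - b ^ q| := by
  have hq0 : 0 ≤ q := le_trans zero_le_one hq
  have key : ∀ s t : ℝ, 0 ≤ s → 0 ≤ t → t ≤ s → (s - t) ^ q ≤ |s ^ q - t ^ q| := by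
    intro s t hs ht hts
    have h1 : (s - t) ^ q + t ^ q ≤ s ^ q := by
      have := rpow_superadd (sub_nonneg.mpr hts) ht hq
      simpa [sub_add_cancel] using this
    have h2 : t ^ q ≤ s ^ q := Real.rpow_le_rpow ht hts hq0
    rw [abs_of_nonneg (sub_nonneg.mpr h2)]
    linarith
  rcases le_total b a with h | h
  · rw [abs_of_nonneg (sub_nonneg.mpr h)]
    exact key a b ha hb h
  · rw [abs_sub_comm, abs_sub_comm (a ^ q), abs_of_nonneg (sub_nonneg.mpr h)]
    exact key b a hb ha h


/-- Generalized dominated convergence theorem for `lintegral`, with a varying dominating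
sequence whose integrals converge. -/
lemma gdct {α : Type*} [MeasurableSpace α] {μ : Measure α}
    {F G : ℕ → α → ℝ≥0∞} {f g : α → ℝ≥0∞}
    (hF : ∀ n, Measurable (F n)) (hG : ∀ n, Measurable (G n))
    (hfm : Measurable f) (hgm : Measurable g)
    (hle : ∀ n, ∀ᵐ x ∂μ, F n x ≤ G n x)
    (hFf : ∀ᵐ x ∂μ, Tendsto (fun n => F n x) atTop (nhds (f x)))
    (hGg : ∀ᵐ x ∂μ, Tendsto (fun n => G n x) atTop (nhds (g x)))
    (hGint : Tendsto (fun n => ∫⁻ x, G n x ∂μ) atTop (nhds (∫⁻ x, g x ∂μ)))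
    (hgfin : ∫⁻ x, g x ∂μ ≠ ⊤) :
    Tendsto (fun n => ∫⁻ x, F n x ∂μ) atTop (nhds (∫⁻ x, f x ∂μ)) := by
  have hle' : ∀ᵐ x ∂μ, ∀ n, F n x ≤ G n x := ae_all_iff.mpr hle
  have hfg : f ≤ᵐ[μ] g := by
    filter_upwards [hle', hFf, hGg] with x h1 h2 h3
    exact le_of_tendsto_of_tendsto' h2 h3 h1
  have hfleg : ∫⁻ x, f x ∂μ ≤ ∫⁻ x, g x ∂μ := lintegral_mono_ae hfg
  have hffin : ∫⁻ x, f x ∂μ ≠ ⊤ := (lt_of_le_of_lt hfleg hgfin.lt_top).ne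
  have hgae : ∀ᵐ x ∂μ, g x ≠ ⊤ := by
    filter_upwards [ae_lt_top hgm hgfin] with x h using h.ne
  have hsub : ∀ᵐ x ∂μ, Tendsto (fun n => G n x - F n x) atTop (nhds (g x - f x)) := by
    filter_upwards [hFf, hGg, hgae] with x h1 h2 h3
    exact ENNReal.Tendsto.sub h2 h1 (Or.inl h3)
  have fatou1 : ∫⁻ x, f x ∂μ ≤ liminf (fun n => ∫⁻ x, F n x ∂μ) atTop := by
    have h1 : ∫⁻ x, f x ∂μ = ∫⁻ x, liminf (fun n => F n x) atTop ∂μ :=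
      lintegral_congr_ae (by filter_upwards [hFf] with x hx using hx.liminf_eq.symm)
    rw [h1]; exact lintegral_liminf_le hF
  set d : ℕ → ℝ≥0∞ := fun n => ∫⁻ x, (G n x - F n x) ∂μ with hd
  have fatou2 : ∫⁻ x, (g x - f x) ∂μ ≤ liminf d atTop := by
    have h1 : ∫⁻ x, (g x - f x) ∂μ = ∫⁻ x, liminf (fun n => G n x - F n x) atTop ∂μ :=
      lintegral_congr_ae (by filter_upwards [hsub] with x hx using hx.liminf_eq.symm)
    rw [h1]; exact lintegral_liminf_le fun n => (hG n).sub (hF n)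
  have key_add : ∀ n, ∫⁻ x, F n x ∂μ + d n = ∫⁻ x, G n x ∂μ := by
    intro n
    rw [hd, ← lintegral_add_left (hF n)]
    refine lintegral_congr_ae ?_
    filter_upwards [hle n] with x hx using add_tsub_cancel_of_le hx
  have key_add' : ∫⁻ x, f x ∂μ + ∫⁻ x, (g x - f x) ∂μ = ∫⁻ x, g x ∂μ := by
    rw [← lintegral_add_left hfm]
    exact lintegral_congr_ae (by filter_upwards [hfg] with x hx using add_tsub_cancel_of_le hx)
  set c0 : ℝ≥0∞ := ∫⁻ x, (g x - f x) ∂μ with hc0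
  have hc0fin : c0 ≠ ⊤ := by
    have : c0 ≤ ∫⁻ x, g x ∂μ := lintegral_mono fun x => tsub_le_self
    exact (lt_of_le_of_lt this hgfin.lt_top).ne
  have hlimsup : limsup (fun n => ∫⁻ x, F n x ∂μ) atTop ≤ ∫⁻ x, f x ∂μ := by
    refine ENNReal.le_of_forall_pos_le_add fun ε hε _ => ?_
    have hε2 : (ε : ℝ≥0∞) / 2 ≠ 0 := by
      simp [ENNReal.div_eq_top, hε.ne']
    have hε2top : (ε : ℝ≥0∞) / 2 ≠ ⊤ :=
      (ENNReal.div_lt_top ENNReal.coe_ne_top (by norm_num)).ne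
    have E1 : ∀ᶠ n in atTop, ∫⁻ x, G n x ∂μ < ∫⁻ x, g x ∂μ + ε / 2 :=
      hGint.eventually_lt_const (ENNReal.lt_add_right hgfin hε2)
    have E2 : ∀ᶠ n in atTop, c0 ≤ d n + ε / 2 := by
      rcases eq_or_ne c0 0 with h | h
      · exact Eventually.of_forall fun n => by simp [h]
      · have hlt : c0 - ε / 2 < liminf d atTop :=
          lt_of_lt_of_le (ENNReal.sub_lt_self hc0fin h hε2) fatou2
        filter_upwards [eventually_lt_of_lt_liminf hlt] with n hn
        exact tsub_le_iff_right.mp hn.le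
    refine limsup_le_of_le (by isBoundedDefault) ?_
    filter_upwards [E1, E2] with n h1 h2
    have hdle : d n ≤ ∫⁻ x, G n x ∂μ := lintegral_mono fun x => tsub_le_self
    have htop : ∫⁻ x, g x ∂μ + ε / 2 < ⊤ :=
      ENNReal.add_lt_top.mpr ⟨hgfin.lt_top, hε2top.lt_top⟩
    have hdfin : d n ≠ ⊤ := (lt_of_le_of_lt hdle (h1.trans htop)).ne
    have h3 : ∫⁻ x, F n x ∂μ + d n ≤ (∫⁻ x, f x ∂μ + ε) + d n := by
      have hhalf : (ε : ℝ≥0∞) / 2 + ε / 2 = ε := ENNReal.add_halves _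
      calc ∫⁻ x, F n x ∂μ + d n = ∫⁻ x, G n x ∂μ := key_add n
        _ ≤ ∫⁻ x, g x ∂μ + ε / 2 := h1.le
        _ = (∫⁻ x, f x ∂μ + c0) + ε / 2 := by rw [key_add']
        _ ≤ (∫⁻ x, f x ∂μ + (d n + ε / 2)) + ε / 2 := by gcongr
        _ = ∫⁻ x, f x ∂μ + ((d n + ε / 2) + ε / 2) := by rw [add_assoc]
        _ = ∫⁻ x, f x ∂μ + (d n + ε) := by rw [add_assoc, hhalf]
        _ = (∫⁻ x, f x ∂μ + ε) + d n := by rw [add_comm (d n), ← add_assoc]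
    exact (ENNReal.add_le_add_iff_right hdfin).mp h3
  exact tendsto_of_le_liminf_of_limsup_le fatou1 hlimsup


lemma lint_rpow_ball_lt_top {c R : ℝ} (hc0 : 0 < c) (hc2 : c < 2) (hR : 0 < R) :
    ∫⁻ z in ball (0 : ℂ) R, ENNReal.ofReal (‖z‖ ^ (-c)) < ⊤ := by
  set ψ : ℂ → ℝ≥0∞ := fun w => ENNReal.ofReal (‖w‖ ^ (-c)) with hψ
  set A : ℕ → Set ℂ := fun k => {z | R / 2 ^ (k + 1) < ‖z‖ ∧ ‖z‖ ≤ R / 2 ^ k}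
    with hA
  have hcover : ball (0 : ℂ) R ⊆ {0} ∪ ⋃ k, A k := by
    intro z hz
    rcases eq_or_ne z 0 with rfl | hz0
    · exact Or.inl rfl
    refine Or.inr ?_
    have hzpos : 0 < ‖z‖ := norm_pos_iff.mpr hz0
    have hzR : ‖z‖ < R := by
      simpa using mem_ball_zero_iff.mp hz
    set x := R / ‖z‖ with hx
    have hx1 : 1 < x := (one_lt_div hzpos).mpr hzR
    have hx0 : 0 < x := lt_trans one_pos hx1
    set k := ⌊Real.logb 2 x⌋₊ with hk
    have hk1 : (2 : ℝ) ^ k ≤ x := by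
      rw [← Real.rpow_natCast]
      calc (2 : ℝ) ^ (k : ℝ) ≤ 2 ^ Real.logb 2 x :=
            Real.rpow_le_rpow_of_exponent_le one_le_two
              (Nat.floor_le (Real.logb_nonneg one_lt_two hx1.le))
        _ = x := Real.rpow_logb two_pos (by norm_num) hx0
    have hk2 : x < (2 : ℝ) ^ (k + 1) := by
      rw [← Real.rpow_natCast]
      calc x = 2 ^ Real.logb 2 x := (Real.rpow_logb two_pos (by norm_num) hx0).symm
        _ < 2 ^ ((k + 1 : ℕ) : ℝ) := by
            apply Real.rpow_lt_rpow_of_exponent_lt one_lt_two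
            push_cast
            exact Nat.lt_floor_add_one _
    refine Set.mem_iUnion.mpr ⟨k, ?_, ?_⟩
    · rw [div_lt_iff₀ (by positivity)]
      rw [hx, div_lt_iff₀ hzpos] at hk2
      linarith [hk2, mul_comm ((2:ℝ) ^ (k+1)) (‖z‖)]
    · rw [le_div_iff₀ (by positivity)]
      rw [hx, le_div_iff₀ hzpos] at hk1
      linarith [hk1, mul_comm ((2:ℝ) ^ k) (‖z‖)]
  set e : ℝ := 2 - c with he
  have he0 : 0 < e := by linarith
  set B : ℝ≥0∞ := volume (ball (0 : ℂ) 1) with hB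
  have hBfin : B < ⊤ := measure_ball_lt_top
  set rr : ℝ≥0∞ := ENNReal.ofReal ((1 / 2 : ℝ) ^ e) with hrr
  have hrr1 : rr < 1 := by
    rw [hrr]
    refine ENNReal.ofReal_lt_one.mpr (Real.rpow_lt_one (by norm_num) (by norm_num) he0)
  set D : ℝ≥0∞ := ENNReal.ofReal (4 * (R / 2) ^ e) * B with hD
  have hterm : ∀ k : ℕ,
      ENNReal.ofReal ((R / 2 ^ (k + 1)) ^ (-c) * (R / 2 ^ k) ^ 2) * B = D * rr ^ k := by
    intro k
    have ht1 : (0 : ℝ) < R / 2 ^ (k + 1) := by positivity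
    have heq : (R / 2 ^ (k + 1)) ^ (-c) * (R / 2 ^ k) ^ 2
        = 4 * ((R / 2) ^ e * ((1 / 2 : ℝ) ^ e) ^ k) := by
      have h1 : (R / 2 ^ k) = 2 * (R / 2 ^ (k + 1)) := by
        rw [pow_succ]; field_simp
      have h2 : (R / 2 ^ (k + 1)) ^ (-c) * (R / 2 ^ (k + 1)) ^ (2 : ℝ)
          = (R / 2 ^ (k + 1)) ^ e := by
        rw [← Real.rpow_add ht1]; congr 1; rw [he]; ring
      have h3 : (R / 2 ^ (k + 1)) = (R / 2) * (1 / 2 : ℝ) ^ k := by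
        rw [pow_succ, div_pow, one_pow]
        rw [div_mul_div_comm]; congr 1 <;> ring
      have h4 : (R / 2 ^ (k + 1)) ^ e = (R / 2) ^ e * ((1 / 2 : ℝ) ^ e) ^ k := by
        rw [h3, Real.mul_rpow (by linarith : (0:ℝ) ≤ R / 2) (by positivity),
          ← Real.rpow_natCast ((1/2 : ℝ)) k, ← Real.rpow_mul (by norm_num : (0:ℝ) ≤ 1/2),
          mul_comm (k : ℝ) e, Real.rpow_mul (by norm_num : (0:ℝ) ≤ 1/2),
          Real.rpow_natCast]
      calc (R / 2 ^ (k + 1)) ^ (-c) * (R / 2 ^ k) ^ 2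
          = (R / 2 ^ (k + 1)) ^ (-c) * (4 * (R / 2 ^ (k + 1)) ^ 2) := by rw [h1]; ring
        _ = 4 * ((R / 2 ^ (k + 1)) ^ (-c) * (R / 2 ^ (k + 1)) ^ (2 : ℝ)) := by
            rw [← Real.rpow_natCast (R / 2 ^ (k+1)) 2]; push_cast; ring
        _ = 4 * (R / 2 ^ (k + 1)) ^ e := by rw [h2]
        _ = 4 * ((R / 2) ^ e * ((1 / 2 : ℝ) ^ e) ^ k) := by rw [h4]
    rw [heq, hD, hrr]
    rw [show (4 : ℝ) * ((R / 2) ^ e * ((1 / 2 : ℝ) ^ e) ^ k)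
        = (4 * (R / 2) ^ e) * ((1 / 2 : ℝ) ^ e) ^ k by ring]
    rw [ENNReal.ofReal_mul (by positivity), ENNReal.ofReal_pow (by positivity)]
    ring
  calc ∫⁻ z in ball (0 : ℂ) R, ψ z ≤ ∫⁻ z in {0} ∪ ⋃ k, A k, ψ z := lintegral_mono_set hcover
    _ ≤ (∫⁻ z in {(0 : ℂ)}, ψ z) + ∫⁻ z in ⋃ k, A k, ψ z := lintegral_union_le _ _ _
    _ ≤ 0 + ∑' k, ∫⁻ z in A k, ψ z := by
        gcongr
        · rw [lintegral_singleton]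
          simp [hψ, Real.zero_rpow (neg_ne_zero.mpr hc0.ne')]
        · exact lintegral_iUnion_le _ _
    _ = ∑' k, ∫⁻ z in A k, ψ z := by rw [zero_add]
    _ ≤ ∑' k, ENNReal.ofReal ((R / 2 ^ (k + 1)) ^ (-c) * (R / 2 ^ k) ^ 2) * B := by
        refine ENNReal.tsum_le_tsum fun k => ?_
        have hbound : ∫⁻ z in A k, ψ z
            ≤ ENNReal.ofReal ((R / 2 ^ (k + 1)) ^ (-c)) * volume (A k) := by
          rw [← setLIntegral_const]
          refine setLIntegral_mono measurable_const fun z hz => ?_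
          exact ENNReal.ofReal_le_ofReal
            (Real.rpow_le_rpow_of_nonpos (by positivity) hz.1.le (by linarith))
        refine le_trans hbound ?_
        have hAsub : A k ⊆ closedBall (0 : ℂ) (R / 2 ^ k) := by
          intro z hz
          rw [mem_closedBall_zero_iff]
          simpa using hz.2
        have hvol : volume (A k) ≤ ENNReal.ofReal ((R / 2 ^ k) ^ 2) * B := by
          refine le_trans (measure_mono hAsub) ?_
          rw [Measure.addHaar_closedBall volume (0 : ℂ) (by positivity)]
          simp [Complex.finrank_real_complex, hB]
        calc ENNReal.ofReal ((R / 2 ^ (k + 1)) ^ (-c)) * volume (A k)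
            ≤ ENNReal.ofReal ((R / 2 ^ (k + 1)) ^ (-c))
              * (ENNReal.ofReal ((R / 2 ^ k) ^ 2) * B) := by gcongr
          _ = ENNReal.ofReal ((R / 2 ^ (k + 1)) ^ (-c) * (R / 2 ^ k) ^ 2) * B := by
              rw [ENNReal.ofReal_mul (by positivity), mul_assoc]
    _ = ∑' k, D * rr ^ k := by exact tsum_congr hterm
    _ = D * ∑' k, rr ^ k := ENNReal.tsum_mul_left
    _ < ⊤ := by
        refine ENNReal.mul_lt_top ?_ ?_
        · exact ENNReal.mul_lt_top ENNReal.ofReal_lt_top hBfin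
        · rw [ENNReal.tsum_geometric]
          exact ENNReal.inv_lt_top.mpr (tsub_pos_of_lt hrr1)


lemma indicator_lintegral (c r : ℝ) :
    ∫⁻ z in ball (0 : ℂ) r, ENNReal.ofReal (‖z‖ ^ (-c))
      = ∫⁻ w, (ball (0 : ℂ) r).indicator (fun _ => (1 : ℝ≥0∞)) w
          * ENNReal.ofReal (‖w‖ ^ (-c)) := by
  rw [← lintegral_indicator measurableSet_ball]
  refine lintegral_congr fun w => ?_
  by_cases h : w ∈ ball (0 : ℂ) r <;> simp [Set.indicator, h]

lemma translate_tendsto {c R : ℝ} (hc0 : 0 < c) (hc2 : c < 2) (hR : 0 < R)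
    {a : ℕ → ℂ} (ha : Tendsto a atTop (nhds 0)) :
    Tendsto (fun n => ∫⁻ z in ball (0 : ℂ) R,
        ENNReal.ofReal (‖z - a n‖ ^ (-c))) atTop
      (nhds (∫⁻ z in ball (0 : ℂ) R, ENNReal.ofReal (‖z‖ ^ (-c)))) := by
  set ψ : ℂ → ℝ≥0∞ := fun w => ENNReal.ofReal (‖w‖ ^ (-c)) with hψdef
  have hψ : Measurable ψ := by
    have := (meas_abs_rpow 0 (-c)).ennreal_ofReal
    simpa using this
  set ind : Set ℂ → ℂ → ℝ≥0∞ := fun s => s.indicator (fun _ => (1 : ℝ≥0∞)) with hind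
  have key : ∀ b : ℂ, ∫⁻ z in ball (0 : ℂ) R, ψ (z - b)
      = ∫⁻ w, ind (ball (0 : ℂ) R) (w + b) * ψ w := by
    intro b
    rw [← lintegral_indicator measurableSet_ball,
      ← lintegral_add_right_eq_self
        (fun z => (ball (0 : ℂ) R).indicator (fun z' => ψ (z' - b)) z) b]
    refine lintegral_congr fun w => ?_
    by_cases h : w + b ∈ ball (0 : ℂ) R <;>
      simp [Set.indicator, hind, h, add_sub_cancel_right]
  have hgoal : (fun n => ∫⁻ z in ball (0 : ℂ) R, ψ (z - a n))
      = fun n => ∫⁻ w, ind (ball (0 : ℂ) R) (w + a n) * ψ w := funext fun n => key (a n)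
  show Tendsto (fun n => ∫⁻ z in ball (0 : ℂ) R, ψ (z - a n)) atTop
      (nhds (∫⁻ z in ball (0 : ℂ) R, ψ z))
  rw [hgoal, indicator_lintegral c R]
  -- pass to a tail where ‖a n‖ < R
  obtain ⟨N, hN⟩ : ∃ N, ∀ n, N ≤ n → ‖a n‖ < R := by
    have h : ∀ᶠ n in atTop, a n ∈ ball (0 : ℂ) R := ha (Metric.ball_mem_nhds (0 : ℂ) hR)
    rw [Filter.eventually_atTop] at h
    obtain ⟨N, hN⟩ := h
    exact ⟨N, fun n hn => by
      simpa [mem_ball_zero_iff] using hN n hn⟩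
  rw [← Filter.tendsto_add_atTop_iff_nat N]
  have hindmeas : ∀ b : ℂ, Measurable fun w => ind (ball (0 : ℂ) R) (w + b) * ψ w := by
    intro b
    exact ((measurable_const.indicator measurableSet_ball).comp
      (measurable_id.add_const b)).mul hψ
  refine tendsto_lintegral_of_dominated_convergence
    (fun w => ind (ball (0 : ℂ) (2 * R)) w * ψ w)
    (fun n => hindmeas (a (n + N))) ?_ ?_ ?_
  · intro n
    refine Eventually.of_forall fun w => ?_
    by_cases h : w + a (n + N) ∈ ball (0 : ℂ) R
    · have h2R : w ∈ ball (0 : ℂ) (2 * R) := by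
        have h3 := norm_add_le (w + a (n + N)) (-(a (n + N)))
        simp only [add_neg_cancel_right, norm_neg] at h3
        have h4 : ‖a (n + N)‖ < R := hN (n + N) (Nat.le_add_left N n)
        rw [mem_ball_zero_iff] at h ⊢
        calc ‖w‖ ≤ ‖w + a (n + N)‖ + ‖a (n + N)‖ := h3
          _ < R + R := add_lt_add h (by simpa using h4)
          _ = 2 * R := by ring
      simp [hind, Set.indicator, h, h2R]
    · simp [hind, Set.indicator, h]
  · rw [← indicator_lintegral c (2 * R)]
    exact (lint_rpow_ball_lt_top hc0 hc2 (by linarith)).ne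
  · have hsph : ∀ᵐ w : ℂ, ‖w‖ ≠ R := by
      have hs : volume (sphere (0 : ℂ) R) = 0 := Measure.addHaar_sphere volume 0 R
      rw [ae_iff]
      refine measure_mono_null ?_ hs
      intro w hw
      simp only [Set.mem_setOf_eq, not_not] at hw
      simpa [mem_sphere_zero_iff_norm] using hw
    refine hsph.mono fun w hw => ?_
    have haw : Tendsto (fun n => w + a (n + N)) atTop (nhds w) := by
      have h0 : Tendsto (fun n => a (n + N)) atTop (nhds 0) :=
        ha.comp (tendsto_add_atTop_nat N)
      simpa using tendsto_const_nhds.add h0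
    rcases lt_or_gt_of_ne hw with hlt | hgt
    · have hw1 : w ∈ ball (0 : ℂ) R := by
        rw [mem_ball_zero_iff]; exact hlt
      have hev : ∀ᶠ n in atTop, w + a (n + N) ∈ ball (0 : ℂ) R :=
        haw (isOpen_ball.mem_nhds hw1)
      refine Tendsto.congr' ?_ tendsto_const_nhds
      filter_upwards [hev] with n hn
      simp [hind, Set.indicator, hn, hw1, hψdef]
    · have hw1 : w ∉ ball (0 : ℂ) R := by
        rw [mem_ball_zero_iff]; exact not_lt.mpr hgt.le
      have hopen : IsOpen {v : ℂ | R < ‖v‖} :=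
        isOpen_lt continuous_const continuous_norm
      have hev : ∀ᶠ n in atTop, w + a (n + N) ∈ {v : ℂ | R < ‖v‖} :=
        haw (hopen.mem_nhds hgt)
      refine Tendsto.congr' ?_ tendsto_const_nhds
      filter_upwards [hev] with n hn
      have hn' : w + a (n + N) ∉ ball (0 : ℂ) R := by
        rw [mem_ball_zero_iff]; exact not_lt.mpr hn.le
      simp [hind, Set.indicator, hn', hw1]

end ProdRpowAux


open ProdRpowAux Metric in
/-- For `β_1, …, β_m ∈ (0,1)` with `σ = β_1 + ⋯ + β_m`, points `p_1, …, p_m ∈ ℂ`,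
`R > 0` and `q ≥ 1` with `qσ < 1`, the functions
`f_t(z) = ∏_j |z − t p_j|^{−2β_j}` converge to `f_0(z) = |z|^{−2σ}` in `L^q` of the
ball `B_R ⊆ ℂ` (with Lebesgue measure) as `t → 0⁺`. -/
theorem prod_rpow_tendsto_Lq_ball
    (m : ℕ) (hm : 1 ≤ m) (β : Fin m → ℝ) (hβ : ∀ j, β j ∈ Set.Ioo (0 : ℝ) 1)
    (p : Fin m → ℂ) (R : ℝ) (hR : 0 < R)
    (q : ℝ) (hq : 1 ≤ q) (hqσ : q * (∑ j, β j) < 1) :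
    Tendsto
      (fun t : ℝ => ∫ z in Metric.ball (0 : ℂ) R,
        |(∏ j, ‖z - (t : ℂ) * p j‖ ^ (-(2 * β j)))
          - ‖z‖ ^ (-(2 * ∑ j, β j))| ^ q)
      (nhdsWithin 0 (Set.Ioi 0)) (nhds 0) := by
  classical
  have hq0 : (0 : ℝ) < q := lt_of_lt_of_le one_pos hq
  set σ : ℝ := ∑ j, β j with hσdef
  have hσpos : 0 < σ :=
    Finset.sum_pos (fun j _ => (hβ j).1) ⟨⟨0, hm⟩, Finset.mem_univ _⟩
  set c : ℝ := 2 * σ * q with hcdef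
  have hc0 : 0 < c := by positivity
  have hc2 : c < 2 := by nlinarith
  rw [Filter.tendsto_iff_seq_tendsto]
  intro u hu
  have hu0 : Tendsto u atTop (nhds 0) := hu.mono_right nhdsWithin_le_nhds
  set P : ℕ → ℂ → ℝ :=
    fun n z => ∏ j, ‖z - ((u n : ℝ) : ℂ) * p j‖ ^ (-(2 * β j)) with hP
  set P0 : ℂ → ℝ := fun z => ‖z‖ ^ (-(2 * σ)) with hP0
  set Q : ℕ → ℂ → ℝ :=
    fun n z => ∏ j, ‖z - ((u n : ℝ) : ℂ) * p j‖ ^ (-(2 * β j) * q) with hQ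
  set Q0 : ℂ → ℝ := fun z => ‖z‖ ^ (-c) with hQ0
  set Gf : ℕ → ℂ → ℝ≥0∞ := fun n z =>
    ∑ j, ENNReal.ofReal ((β j / σ) * ‖z - ((u n : ℝ) : ℂ) * p j‖ ^ (-c)) with hGf
  show Tendsto (fun n => ∫ z in ball (0 : ℂ) R, |P n z - P0 z| ^ q) atTop (nhds 0)
  -- measurability facts
  have measP : ∀ n, Measurable (P n) :=
    fun n => Finset.measurable_prod _ fun j _ => meas_abs_rpow _ _
  have measQ : ∀ n, Measurable (Q n) :=
    fun n => Finset.measurable_prod _ fun j _ => meas_abs_rpow _ _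
  have measP0 : Measurable P0 := by
    have := meas_abs_rpow 0 (-(2 * σ)); simpa [hP0] using this
  have measQ0 : Measurable Q0 := by
    have := meas_abs_rpow 0 (-c); simpa [hQ0] using this
  have measGf : ∀ n, Measurable (Gf n) := by
    intro n
    exact Finset.measurable_sum _ fun j _ =>
      ((meas_abs_rpow _ (-c)).const_mul (β j / σ)).ennreal_ofReal
  set μ : Measure ℂ := volume.restrict (ball (0 : ℂ) R) with hμ
  have hae0 : ∀ᵐ z ∂μ, z ≠ (0 : ℂ) := by
    refine ae_restrict_of_ae ?_
    have hs : volume ({(0 : ℂ)} : Set ℂ) = 0 := measure_singleton 0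
    rw [ae_iff]
    refine measure_mono_null ?_ hs
    intro z hz
    simpa using hz
  -- pointwise limits
  have hbase : ∀ j : Fin m, Tendsto (fun n => ((u n : ℝ) : ℂ) * p j) atTop (nhds 0) := by
    intro j
    have h1 : Tendsto (fun n => ((u n : ℝ) : ℂ)) atTop (nhds 0) := by
      have h2 := (Complex.continuous_ofReal.tendsto 0).comp hu0
      simpa [Function.comp_def] using h2
    simpa using h1.mul_const (p j)
  have habs : ∀ (j : Fin m) (z : ℂ),
      Tendsto (fun n => ‖z - ((u n : ℝ) : ℂ) * p j‖) atTop
        (nhds (‖z‖)) := by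
    intro j z
    have h2 : Tendsto (fun n => z - ((u n : ℝ) : ℂ) * p j) atTop (nhds z) := by
      simpa using tendsto_const_nhds.sub (hbase j)
    exact (continuous_norm.tendsto z).comp h2
  have hfac : ∀ (e : ℝ) (j : Fin m) (z : ℂ), z ≠ 0 →
      Tendsto (fun n => ‖z - ((u n : ℝ) : ℂ) * p j‖ ^ e) atTop
        (nhds (‖z‖ ^ e)) := by
    intro e j z hz
    have habs0 : ‖z‖ ≠ 0 := norm_ne_zero_iff.mpr hz
    exact (Real.continuousAt_rpow_const _ e (Or.inl habs0)).tendsto.comp (habs j z)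
  have hPconv : ∀ z : ℂ, z ≠ 0 → Tendsto (fun n => P n z) atTop (nhds (P0 z)) := by
    intro z hz
    have h := tendsto_finset_prod (Finset.univ)
      (fun j _ => hfac (-(2 * β j)) j z hz)
    have habs0 : (0 : ℝ) < ‖z‖ := norm_pos_iff.mpr hz
    have heq : ∏ j, ‖z‖ ^ (-(2 * β j)) = P0 z := by
      rw [← Real.rpow_sum_of_pos habs0, hP0]
      congr 1
      rw [hσdef, Finset.mul_sum, ← Finset.sum_neg_distrib]
    exact heq ▸ h
  have hQconv : ∀ z : ℂ, z ≠ 0 → Tendsto (fun n => Q n z) atTop (nhds (Q0 z)) := by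
    intro z hz
    have h := tendsto_finset_prod (Finset.univ)
      (fun j _ => hfac (-(2 * β j) * q) j z hz)
    have habs0 : (0 : ℝ) < ‖z‖ := norm_pos_iff.mpr hz
    have heq : ∏ j, ‖z‖ ^ (-(2 * β j) * q) = Q0 z := by
      rw [← Real.rpow_sum_of_pos habs0, hQ0]
      congr 1
      simp only [neg_mul]
      rw [Finset.sum_neg_distrib, ← Finset.sum_mul, ← Finset.mul_sum, ← hσdef, hcdef]
    exact heq ▸ h
  have hsumw : ∑ j, β j / σ = 1 := by
    rw [← Finset.sum_div, ← hσdef, div_self hσpos.ne']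
  have hGconv : ∀ z : ℂ, z ≠ 0 →
      Tendsto (fun n => Gf n z) atTop (nhds (ENNReal.ofReal (Q0 z))) := by
    intro z hz
    have hGlim : (∑ j, ENNReal.ofReal ((β j / σ) * Q0 z)) = ENNReal.ofReal (Q0 z) := by
      have hnn : 0 ≤ Q0 z := Real.rpow_nonneg (norm_nonneg z) _
      rw [← ENNReal.ofReal_sum_of_nonneg
        (fun j _ => mul_nonneg (div_nonneg (hβ j).1.le hσpos.le) hnn)]
      rw [← Finset.sum_mul, hsumw, one_mul]
    have h := tendsto_finset_sum (Finset.univ : Finset (Fin m)) (fun j _ =>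
      (ENNReal.continuous_ofReal.tendsto _).comp
        ((hfac (-c) j z hz).const_mul (β j / σ)))
    exact hGlim ▸ h
  -- AM-GM pointwise domination
  have hQle : ∀ n z, ENNReal.ofReal (Q n z) ≤ Gf n z := by
    intro n z
    have hAM : Q n z ≤ ∑ j, (β j / σ) * ‖z - ((u n : ℝ) : ℂ) * p j‖ ^ (-c) := by
      have h := Real.geom_mean_le_arith_mean_weighted Finset.univ (fun j => β j / σ)
        (fun j => ‖z - ((u n : ℝ) : ℂ) * p j‖ ^ (-c))
        (fun j _ => div_nonneg (hβ j).1.le hσpos.le) hsumw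
        (fun j _ => Real.rpow_nonneg (norm_nonneg _) _)
      refine le_trans (le_of_eq ?_) h
      refine Finset.prod_congr rfl fun j _ => ?_
      rw [← Real.rpow_mul (norm_nonneg _)]
      congr 1
      rw [hcdef]
      field_simp
    calc ENNReal.ofReal (Q n z)
        ≤ ENNReal.ofReal (∑ j, (β j / σ) * ‖z - ((u n : ℝ) : ℂ) * p j‖ ^ (-c)) :=
          ENNReal.ofReal_le_ofReal hAM
      _ = Gf n z := ENNReal.ofReal_sum_of_nonneg fun j _ =>
          mul_nonneg (div_nonneg (hβ j).1.le hσpos.le)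
            (Real.rpow_nonneg (norm_nonneg _) _)
  -- pointwise comparison of integrands
  have hPak : ∀ n z, ENNReal.ofReal (|P n z - P0 z| ^ q)
      ≤ ENNReal.ofReal (|Q n z - Q0 z|) := by
    intro n z
    refine ENNReal.ofReal_le_ofReal ?_
    have hPnn : 0 ≤ P n z :=
      Finset.prod_nonneg fun j _ => Real.rpow_nonneg (norm_nonneg _) _
    have hP0nn : 0 ≤ P0 z := Real.rpow_nonneg (norm_nonneg _) _
    have hPq : (P n z) ^ q = Q n z := by
      rw [hP, hQ]
      rw [← Real.finset_prod_rpow Finset.univ _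
        (fun j _ => Real.rpow_nonneg (norm_nonneg _) _) q]
      refine Finset.prod_congr rfl fun j _ => ?_
      rw [← Real.rpow_mul (norm_nonneg _)]
    have hP0q : (P0 z) ^ q = Q0 z := by
      rw [hP0, hQ0, ← Real.rpow_mul (norm_nonneg _)]
      congr 1
      rw [hcdef]; ring
    calc |P n z - P0 z| ^ q ≤ |(P n z) ^ q - (P0 z) ^ q| := abs_sub_rpow_le hPnn hP0nn hq
      _ = |Q n z - Q0 z| := by rw [hPq, hP0q]
  -- integral limits
  set L0 : ℝ≥0∞ := ∫⁻ z, ENNReal.ofReal (Q0 z) ∂μ with hL0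
  have hL0fin : L0 ≠ ⊤ := by
    rw [hL0, hμ, hQ0]
    exact (lint_rpow_ball_lt_top hc0 hc2 hR).ne
  have hT1 : ∀ j : Fin m, Tendsto (fun n => ∫⁻ z in ball (0 : ℂ) R,
      ENNReal.ofReal (‖z - ((u n : ℝ) : ℂ) * p j‖ ^ (-c))) atTop
      (nhds (∫⁻ z in ball (0 : ℂ) R, ENNReal.ofReal (‖z‖ ^ (-c)))) :=
    fun j => translate_tendsto hc0 hc2 hR (hbase j)
  have hGfint_eq : ∀ n, ∫⁻ z, Gf n z ∂μ
      = ∑ j, ENNReal.ofReal (β j / σ) * ∫⁻ z in ball (0 : ℂ) R,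
          ENNReal.ofReal (‖z - ((u n : ℝ) : ℂ) * p j‖ ^ (-c)) := by
    intro n
    rw [hGf]
    rw [lintegral_finset_sum _ (fun j _ =>
      ((meas_abs_rpow _ (-c)).const_mul (β j / σ)).ennreal_ofReal)]
    refine Finset.sum_congr rfl fun j _ => ?_
    simp_rw [ENNReal.ofReal_mul (div_nonneg (hβ j).1.le hσpos.le)]
    rw [lintegral_const_mul _ ((meas_abs_rpow _ (-c)).ennreal_ofReal)]
  have hGint : Tendsto (fun n => ∫⁻ z, Gf n z ∂μ) atTop (nhds L0) := by
    have h2 := tendsto_finset_sum (Finset.univ : Finset (Fin m)) (fun j _ =>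
      ENNReal.Tendsto.const_mul (a := ENNReal.ofReal (β j / σ)) (hT1 j)
        (Or.inr ENNReal.ofReal_ne_top))
    have h3 : ∑ j : Fin m, ENNReal.ofReal (β j / σ)
        * (∫⁻ z in ball (0 : ℂ) R, ENNReal.ofReal (‖z‖ ^ (-c))) = L0 := by
      rw [← Finset.sum_mul, ← ENNReal.ofReal_sum_of_nonneg
        (fun j _ => div_nonneg (hβ j).1.le hσpos.le), hsumw, ENNReal.ofReal_one, one_mul,
        hL0, hμ, hQ0]
    rw [h3] at h2
    exact Tendsto.congr (fun n => (hGfint_eq n).symm) h2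
  have measQof : ∀ n, Measurable fun z => ENNReal.ofReal (Q n z) :=
    fun n => (measQ n).ennreal_ofReal
  have measQ0of : Measurable fun z => ENNReal.ofReal (Q0 z) := measQ0.ennreal_ofReal
  have hT2 : Tendsto (fun n => ∫⁻ z, ENNReal.ofReal (Q n z) ∂μ) atTop (nhds L0) := by
    have h := gdct (μ := μ) (F := fun n z => ENNReal.ofReal (Q n z)) (G := Gf)
      (f := fun z => ENNReal.ofReal (Q0 z)) (g := fun z => ENNReal.ofReal (Q0 z))
      measQof measGf measQ0of measQ0of
      (fun n => Eventually.of_forall fun z => hQle n z)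
      (by filter_upwards [hae0] with z hz using
        (ENNReal.continuous_ofReal.tendsto _).comp (hQconv z hz))
      (by filter_upwards [hae0] with z hz using hGconv z hz)
      hGint hL0fin
    exact h
  have hT3 : Tendsto (fun n => ∫⁻ z, ENNReal.ofReal (|Q n z - Q0 z|) ∂μ) atTop (nhds 0) := by
    have heq : ∀ n, ∫⁻ z, (ENNReal.ofReal (Q n z) + ENNReal.ofReal (Q0 z)) ∂μ
        = (∫⁻ z, ENNReal.ofReal (Q n z) ∂μ) + L0 :=
      fun n => lintegral_add_left (measQof n) _
    have hgeq : ∫⁻ z, (ENNReal.ofReal (Q0 z) + ENNReal.ofReal (Q0 z)) ∂μ = L0 + L0 :=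
      lintegral_add_left measQ0of _
    have h := gdct (μ := μ)
      (F := fun n z => ENNReal.ofReal (|Q n z - Q0 z|))
      (G := fun n z => ENNReal.ofReal (Q n z) + ENNReal.ofReal (Q0 z))
      (f := fun _ => 0)
      (g := fun z => ENNReal.ofReal (Q0 z) + ENNReal.ofReal (Q0 z))
      (fun n => ((measQ n).sub measQ0).abs.ennreal_ofReal)
      (fun n => (measQof n).add measQ0of)
      measurable_const (measQ0of.add measQ0of)
      (fun n => Eventually.of_forall fun z => ?_)
      ?_ ?_ ?_ ?_
    · simpa using h
    · -- pointwise bound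
      have h1 : 0 ≤ Q n z :=
        Finset.prod_nonneg fun j _ => Real.rpow_nonneg (norm_nonneg _) _
      have h2 : 0 ≤ Q0 z := Real.rpow_nonneg (norm_nonneg _) _
      have h3 : |Q n z - Q0 z| ≤ Q n z + Q0 z := by
        have := abs_sub (Q n z) (Q0 z)
        rw [abs_of_nonneg h1, abs_of_nonneg h2] at this
        exact this
      calc ENNReal.ofReal (|Q n z - Q0 z|) ≤ ENNReal.ofReal (Q n z + Q0 z) :=
            ENNReal.ofReal_le_ofReal h3
        _ = ENNReal.ofReal (Q n z) + ENNReal.ofReal (Q0 z) := ENNReal.ofReal_add h1 h2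
    · filter_upwards [hae0] with z hz
      have h4 : Tendsto (fun n => |Q n z - Q0 z|) atTop (nhds 0) := by
        have := ((hQconv z hz).sub (tendsto_const_nhds (x := Q0 z))).abs
        simpa using this
      have h5 := (ENNReal.continuous_ofReal.tendsto 0).comp h4
      simpa [Function.comp_def] using h5
    · filter_upwards [hae0] with z hz
      exact ((ENNReal.continuous_ofReal.tendsto _).comp (hQconv z hz)).add tendsto_const_nhds
    · rw [hgeq]
      exact Tendsto.congr (fun n => (heq n).symm) (hT2.add tendsto_const_nhds)
    · rw [hgeq]
      exact ENNReal.add_ne_top.mpr ⟨hL0fin, hL0fin⟩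
  have hkey : Tendsto (fun n => ∫⁻ z, ENNReal.ofReal (|P n z - P0 z| ^ q) ∂μ) atTop
      (nhds 0) :=
    tendsto_of_tendsto_of_tendsto_of_le_of_le tendsto_const_nhds hT3
      (fun n => zero_le) (fun n => lintegral_mono fun z => hPak n z)
  have hreal : ∀ n, ∫ z in ball (0 : ℂ) R, |P n z - P0 z| ^ q
      = (∫⁻ z, ENNReal.ofReal (|P n z - P0 z| ^ q) ∂μ).toReal := by
    intro n
    rw [hμ]
    rw [integral_eq_lintegral_of_nonneg_ae
      (Eventually.of_forall fun z => Real.rpow_nonneg (abs_nonneg _) q)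
      (by
        have h1 : Measurable fun z => |P n z - P0 z| := ((measP n).sub measP0).abs
        have hcont : Continuous fun x : ℝ => x ^ q :=
          continuous_iff_continuousAt.mpr fun x =>
            Real.continuousAt_rpow_const x q (Or.inr hq0.le)
        exact (hcont.measurable.comp h1).aestronglyMeasurable)]
  have hfinal := (ENNReal.tendsto_toReal (by simp : (0 : ℝ≥0∞) ≠ ⊤)).comp hkey
  rw [show ((0 : ℝ≥0∞)).toReal = 0 by simp] at hfinal
  exact Tendsto.congr (fun n => (hreal n).symm) hfinal
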